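/- The dec-min and inc-max acyclic orientation problems are special cases of minimizing ∑_{v∈V} φ(ρ(v)) over acyclic orientations: for any two distinct orientations D and D' of G with n = |V| vertices, D is strictly better than D' with respect to decreasing minimality of the indegree sequence if and only if ∑_{v∈V} n^{ρ_D(v)} < ∑_{v∈V} n^{ρ_{D'}(v)}. -/

import Mathlib

open Finset

/-- A finite loop-free multigraph: edges indexed by `E`, each with two distinct endpoints. -/
structure Multigraph (V E : Type) where
  fst : E → V
  snd : E → V
  loopless : ∀ e, fst e ≠ snd e

namespace Multigraph

variable {V E : Type} [Fintype V] [DecidableEq V] [Fintype E] [DecidableEq E]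

/-- Head of edge `e` under orientation `o`. -/
def head (G : Multigraph V E) (o : E → Bool) (e : E) : V :=
  if o e then G.fst e else G.snd e

/-- Tail of edge `e` under orientation `o`. -/
def tail (G : Multigraph V E) (o : E → Bool) (e : E) : V :=
  if o e then G.snd e else G.fst e

/-- Indegree of `v` under orientation `o`. -/
def indeg (G : Multigraph V E) (o : E → Bool) (v : V) : ℕ :=
  (Finset.univ.filter (fun e => G.head o e = v)).card

/-- The orientation `o` contains a directed cycle (a closed directed trail). -/
def HasDicycle (G : Multigraph V E) (o : E → Bool) : Prop :=
  ∃ k : ℕ, ∃ hk : 0 < k, ∃ f : Fin k → E, Function.Injective f ∧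
    ∀ i : Fin k, G.head o (f i) = G.tail o (f ⟨(i.val + 1) % k, Nat.mod_lt _ hk⟩)

/-- The orientation `o` is acyclic. -/
def Acyclic (G : Multigraph V E) (o : E → Bool) : Prop := ¬ G.HasDicycle o

/-- Left-degree of `v` in the vertex ordering `σ`. -/
def leftDeg (G : Multigraph V E) (σ : V ≃ Fin (Fintype.card V)) (v : V) : ℕ :=
  (Finset.univ.filter (fun e =>
    (G.fst e = v ∧ σ (G.snd e) < σ v) ∨ (G.snd e = v ∧ σ (G.fst e) < σ v))).card

/-- Right-degree of `v` in the vertex ordering `σ`. -/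
def rightDeg (G : Multigraph V E) (σ : V ≃ Fin (Fintype.card V)) (v : V) : ℕ :=
  (Finset.univ.filter (fun e =>
    (G.fst e = v ∧ σ v < σ (G.snd e)) ∨ (G.snd e = v ∧ σ v < σ (G.fst e)))).card

/-- Degree of `v` in the subgraph induced by `S`. -/
def degIn (G : Multigraph V E) (S : Finset V) (v : V) : ℕ :=
  (Finset.univ.filter (fun e =>
    (G.fst e = v ∨ G.snd e = v) ∧ G.fst e ∈ S ∧ G.snd e ∈ S)).card

/-- Degree of `v` in `G`. -/
def deg (G : Multigraph V E) (v : V) : ℕ :=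
  (Finset.univ.filter (fun e => G.fst e = v ∨ G.snd e = v)).card

/-- The set of vertices appearing at or before `v` in the ordering `σ`. -/
def prefixSet (σ : V ≃ Fin (Fintype.card V)) (v : V) : Finset V :=
  Finset.univ.filter (fun u => σ u ≤ σ v)

end Multigraph

open Multigraph

variable {V E : Type} [Fintype V] [DecidableEq V] [Fintype E] [DecidableEq E]

/-- The non-increasingly sorted indegree list of `o`. -/
def sortedDesc (G : Multigraph V E) (o : E → Bool) : List ℕ :=
  ((Finset.univ.val.map (G.indeg o)).sort (· ≤ ·)).reverse

lemma powSum_lt_of_lex (n : ℕ) : ∀ a b : List ℕ, a.Pairwise (· ≥ ·) → b.Pairwise (· ≥ ·) →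
    a.length = b.length → a.length ≤ n → a.sum = b.sum →
    List.Lex (· < ·) a b → (a.map (n ^ ·)).sum < (b.map (n ^ ·)).sum := by
  intro a
  induction a with
  | nil =>
    intro b _ _ hlen _ _ hlex
    cases hlex
    simp at hlen
  | cons x l ih =>
    intro b hsa hsb hlen hle hsum hlex
    cases hlex with
    | cons h' =>
      rename_i bs
      have hlen' : l.length = bs.length := by simpa using hlen
      have hle' : l.length ≤ n := by simp at hle; omega
      have hsum' : l.sum = bs.sum := by simp at hsum; omega
      have := ih bs ((List.pairwise_cons.mp hsa).2) ((List.pairwise_cons.mp hsb).2)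
        hlen' hle' hsum' h'
      simpa using Nat.add_lt_add_left this (n ^ x)
    | rel hxy =>
      rename_i y bs
      have hlen' : l.length = bs.length := by simpa using hlen
      have hn1 : 1 ≤ n := by simp at hle; omega
      have hbs : bs ≠ [] := by
        intro hbsnil
        subst hbsnil
        have : l = [] := List.eq_nil_of_length_eq_zero (by simpa using hlen')
        subst this
        simp at hsum
        omega
      have hbound : (l.map (n ^ ·)).sum ≤ l.length * n ^ x := by
        have := List.sum_le_card_nsmul (l.map (n ^ ·)) (n ^ x) (by
          intro z hz
          simp at hz
          obtain ⟨w, hw, rfl⟩ := hz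
          exact Nat.pow_le_pow_right hn1 ((List.pairwise_cons.mp hsa).1 w hw))
        simpa [smul_eq_mul] using this
      have hL : n ^ x + (l.map (n ^ ·)).sum ≤ n ^ y := by
        calc n ^ x + (l.map (n ^ ·)).sum ≤ n ^ x + l.length * n ^ x := by omega
          _ = (l.length + 1) * n ^ x := by ring
          _ ≤ n * n ^ x := by
              have : l.length + 1 ≤ n := by simpa using hle
              exact Nat.mul_le_mul_right _ this
          _ = n ^ (x + 1) := by ring
          _ ≤ n ^ y := Nat.pow_le_pow_right hn1 hxy
      have hR : 1 ≤ (bs.map (n ^ ·)).sum := by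
        obtain ⟨z, zs, rfl⟩ := List.exists_cons_of_ne_nil hbs
        have : 1 ≤ n ^ z := Nat.one_le_pow _ _ hn1
        simp
        omega
      simp only [List.map_cons, List.sum_cons]
      omega

lemma sortedDesc_coe (G : Multigraph V E) (o : E → Bool) :
    (sortedDesc G o : Multiset ℕ) = Finset.univ.val.map (G.indeg o) := by
  unfold sortedDesc
  rw [Multiset.coe_reverse, Multiset.sort_eq]

lemma sortedDesc_length (G : Multigraph V E) (o : E → Bool) :
    (sortedDesc G o).length = Fintype.card V := by
  have := congrArg Multiset.card (sortedDesc_coe G o)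
  rw [Multiset.coe_card, Multiset.card_map] at this
  exact this

lemma sortedDesc_sorted (G : Multigraph V E) (o : E → Bool) :
    (sortedDesc G o).Pairwise (· ≥ ·) := by
  unfold sortedDesc
  have hs := Multiset.pairwise_sort (r := (· ≤ ·)) (s := Finset.univ.val.map (G.indeg o))
  exact List.pairwise_reverse.mpr hs

lemma sortedDesc_sum (G : Multigraph V E) (o : E → Bool) :
    (sortedDesc G o).sum = Fintype.card E := by
  have h := congrArg Multiset.sum (sortedDesc_coe G o)
  rw [Multiset.sum_coe] at h
  rw [h]
  have : ∑ v : V, G.indeg o v = Fintype.card E := by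
    rw [Fintype.card, Finset.card_eq_sum_card_fiberwise
      (f := G.head o) (t := Finset.univ) (fun x _ => Finset.mem_univ _)]
    rfl
  rw [← this]
  rfl

lemma sortedDesc_map_sum (G : Multigraph V E) (o : E → Bool) (f : ℕ → ℕ) :
    ((sortedDesc G o).map f).sum = ∑ v : V, f (G.indeg o v) := by
  have h := congrArg (fun m => (Multiset.map f m).sum) (sortedDesc_coe G o)
  simp only [Multiset.map_coe, Multiset.sum_coe] at h
  rw [h, Multiset.map_map]
  rfl

theorem decMin_iff_powerSum (G : Multigraph V E) (o o' : E → Bool) (h : o ≠ o') :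
    List.Lex (· < ·) (sortedDesc G o) (sortedDesc G o') ↔
      ∑ v : V, (Fintype.card V) ^ (G.indeg o v) <
        ∑ v : V, (Fintype.card V) ^ (G.indeg o' v) := by
  set n := Fintype.card V with hn
  have key : ∀ p q : E → Bool, List.Lex (· < ·) (sortedDesc G p) (sortedDesc G q) →
      ∑ v : V, n ^ (G.indeg p v) < ∑ v : V, n ^ (G.indeg q v) := by
    intro p q hlex
    rw [← sortedDesc_map_sum G p (n ^ ·), ← sortedDesc_map_sum G q (n ^ ·)]
    exact powSum_lt_of_lex n _ _ (sortedDesc_sorted G p) (sortedDesc_sorted G q)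
      (by rw [sortedDesc_length, sortedDesc_length])
      (le_of_eq (sortedDesc_length G p))
      (by rw [sortedDesc_sum, sortedDesc_sum]) hlex
  constructor
  · exact key o o'
  · intro hS
    have tri : List.Lex (· < ·) (sortedDesc G o) (sortedDesc G o') ∨
        sortedDesc G o = sortedDesc G o' ∨
        List.Lex (· < ·) (sortedDesc G o') (sortedDesc G o) :=
      trichotomous_of _ _ _
    rcases tri with
      hlt | heq | hgt
    · exact hlt
    · exfalso
      rw [← sortedDesc_map_sum G o (n ^ ·), ← sortedDesc_map_sum G o' (n ^ ·), heq] at hS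
      exact lt_irrefl _ hS
    · exact absurd hS (not_lt_of_gt (key o' o hgt))
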